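/- Let H : ℝ² → ℝ be a twice continuously differentiable function with nowhere-vanishing gradient on an open set U. Then the vector field ∇H/|∇H| has vanishing curl on U (i.e., ∂/∂y of its first component equals ∂/∂x of its second component) if and only if H_{xy}(H_x² - H_y²) = H_x H_y (H_{xx} - H_{yy}) on U. -/

import Mathlib

/-- Partial derivative in the first variable. -/
noncomputable def px (f : ℝ × ℝ → ℝ) (p : ℝ × ℝ) : ℝ := deriv (fun x => f (x, p.2)) p.1

/-- Partial derivative in the second variable. -/
noncomputable def py (f : ℝ × ℝ → ℝ) (p : ℝ × ℝ) : ℝ := deriv (fun y => f (p.1, y)) p.2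

private lemma hasDerivAt_px {F : ℝ × ℝ → ℝ} {p : ℝ × ℝ} (h : DifferentiableAt ℝ F p) :
    HasDerivAt (fun x => F (x, p.2)) (fderiv ℝ F p (1, 0)) p.1 := by
  have hl : HasDerivAt (fun x : ℝ => (x, p.2)) ((1 : ℝ), (0 : ℝ)) p.1 :=
    HasDerivAt.prodMk (hasDerivAt_id p.1) (hasDerivAt_const p.1 p.2)
  exact h.hasFDerivAt.comp_hasDerivAt p.1 hl

private lemma hasDerivAt_py {F : ℝ × ℝ → ℝ} {p : ℝ × ℝ} (h : DifferentiableAt ℝ F p) :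
    HasDerivAt (fun y => F (p.1, y)) (fderiv ℝ F p (0, 1)) p.2 := by
  have hl : HasDerivAt (fun y : ℝ => (p.1, y)) ((0 : ℝ), (1 : ℝ)) p.2 :=
    HasDerivAt.prodMk (hasDerivAt_const p.2 p.1) (hasDerivAt_id p.2)
  exact h.hasFDerivAt.comp_hasDerivAt p.2 hl

theorem stmt4 (H : ℝ × ℝ → ℝ) (U : Set (ℝ × ℝ)) (hU : IsOpen U)
    (hH : ContDiff ℝ 2 H)
    (hgrad : ∀ p ∈ U, (px H p, py H p) ≠ (0, 0)) :
    (∀ p ∈ U,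
      px (fun q => py H q / Real.sqrt ((px H q) ^ 2 + (py H q) ^ 2)) p
        = py (fun q => px H q / Real.sqrt ((px H q) ^ 2 + (py H q) ^ 2)) p)
    ↔ (∀ p ∈ U,
      py (px H) p * ((px H p) ^ 2 - (py H p) ^ 2)
        = px H p * py H p * (px (px H) p - py (py H) p)) := by
  have hH1 : Differentiable ℝ H := hH.differentiable two_ne_zero
  have hAeq : px H = fun q => fderiv ℝ H q (1, 0) :=
    funext fun q => (hasDerivAt_px (hH1 q)).deriv
  have hBeq : py H = fun q => fderiv ℝ H q (0, 1) :=
    funext fun q => (hasDerivAt_py (hH1 q)).deriv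
  have hfd : ContDiff ℝ 1 (fun q => fderiv ℝ H q) := hH.fderiv_right (by norm_num)
  have hA : ContDiff ℝ 1 (px H) := by rw [hAeq]; exact hfd.clm_apply contDiff_const
  have hB : ContDiff ℝ 1 (py H) := by rw [hBeq]; exact hfd.clm_apply contDiff_const
  have key : ∀ p ∈ U,
      (px (fun q => py H q / Real.sqrt ((px H q) ^ 2 + (py H q) ^ 2)) p
        = py (fun q => px H q / Real.sqrt ((px H q) ^ 2 + (py H q) ^ 2)) p)
      ↔ (py (px H) p * ((px H p) ^ 2 - (py H p) ^ 2)
        = px H p * py H p * (px (px H) p - py (py H) p)) := by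
    intro p hp
    set a := px H p with ha
    set b := py H p with hb
    have hA' : DifferentiableAt ℝ (px H) p := (hA.differentiable one_ne_zero) p
    have hB' : DifferentiableAt ℝ (py H) p := (hB.differentiable one_ne_zero) p
    set A' := fderiv ℝ (px H) p with hA'def
    set B' := fderiv ℝ (py H) p with hB'def
    -- symmetry of second derivatives
    have hfd' : DifferentiableAt ℝ (fun q => fderiv ℝ H q) p :=
      (hfd.differentiable one_ne_zero) p
    have hAder : ∀ w : ℝ × ℝ, A' w = fderiv ℝ (fun q => fderiv ℝ H q) p w (1, 0) := by
      intro w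
      rw [hA'def, hAeq, fderiv_clm_apply hfd' (differentiableAt_const _)]
      simp
    have hBder : ∀ w : ℝ × ℝ, B' w = fderiv ℝ (fun q => fderiv ℝ H q) p w (0, 1) := by
      intro w
      rw [hB'def, hBeq, fderiv_clm_apply hfd' (differentiableAt_const _)]
      simp
    have hsymm : B' (1, 0) = A' (0, 1) := by
      rw [hAder, hBder]
      exact (hH.contDiffAt.isSymmSndFDerivAt (by norm_num)).eq (1, 0) (0, 1)
    -- positivity
    have hab : a ≠ 0 ∨ b ≠ 0 := by
      have := hgrad p hp
      rw [ne_eq, Prod.mk.injEq, not_and_or] at this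
      tauto
    have hpos : 0 < a ^ 2 + b ^ 2 := by
      rcases hab with h | h
      · have : 0 < a ^ 2 := by positivity
        nlinarith [sq_nonneg b]
      · have : 0 < b ^ 2 := by positivity
        nlinarith [sq_nonneg a]
    set g := Real.sqrt (a ^ 2 + b ^ 2) with hgdef
    have hg : 0 < g := Real.sqrt_pos.2 hpos
    have hg2 : g ^ 2 = a ^ 2 + b ^ 2 := Real.sq_sqrt hpos.le
    -- derivatives along x
    have hA1 : HasDerivAt (fun x => px H (x, p.2)) (A' (1, 0)) p.1 := hasDerivAt_px hA'
    have hB1 : HasDerivAt (fun x => py H (x, p.2)) (B' (1, 0)) p.1 := hasDerivAt_px hB'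
    have hN1 : HasDerivAt (fun x => px H (x, p.2) ^ 2 + py H (x, p.2) ^ 2)
        (2 * a ^ 1 * A' (1, 0) + 2 * b ^ 1 * B' (1, 0)) p.1 := by
      have := (hA1.pow 2).add (hB1.pow 2)
      norm_num at this ⊢
      exact this
    have hS1 : HasDerivAt (fun x => Real.sqrt (px H (x, p.2) ^ 2 + py H (x, p.2) ^ 2))
        (1 / (2 * g) * (2 * a ^ 1 * A' (1, 0) + 2 * b ^ 1 * B' (1, 0))) p.1 := by
      have := (Real.hasDerivAt_sqrt hpos.ne').comp p.1 hN1
      exact this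
    have hf1 : HasDerivAt
        (fun x => py H (x, p.2) / Real.sqrt (px H (x, p.2) ^ 2 + py H (x, p.2) ^ 2))
        ((B' (1, 0) * g - b * (1 / (2 * g) * (2 * a ^ 1 * A' (1, 0) + 2 * b ^ 1 * B' (1, 0))))
          / g ^ 2) p.1 := by
      have := hB1.div hS1 (by simpa [hgdef] using hg.ne')
      exact this
    -- derivatives along y
    have hA2 : HasDerivAt (fun y => px H (p.1, y)) (A' (0, 1)) p.2 := hasDerivAt_py hA'
    have hB2 : HasDerivAt (fun y => py H (p.1, y)) (B' (0, 1)) p.2 := hasDerivAt_py hB'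
    have hN2 : HasDerivAt (fun y => px H (p.1, y) ^ 2 + py H (p.1, y) ^ 2)
        (2 * a ^ 1 * A' (0, 1) + 2 * b ^ 1 * B' (0, 1)) p.2 := by
      have := (hA2.pow 2).add (hB2.pow 2)
      norm_num at this ⊢
      exact this
    have hS2 : HasDerivAt (fun y => Real.sqrt (px H (p.1, y) ^ 2 + py H (p.1, y) ^ 2))
        (1 / (2 * g) * (2 * a ^ 1 * A' (0, 1) + 2 * b ^ 1 * B' (0, 1))) p.2 := by
      have := (Real.hasDerivAt_sqrt hpos.ne').comp p.2 hN2
      exact this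
    have hf2 : HasDerivAt
        (fun y => px H (p.1, y) / Real.sqrt (px H (p.1, y) ^ 2 + py H (p.1, y) ^ 2))
        ((A' (0, 1) * g - a * (1 / (2 * g) * (2 * a ^ 1 * A' (0, 1) + 2 * b ^ 1 * B' (0, 1))))
          / g ^ 2) p.2 := by
      have := hA2.div hS2 (by simpa [hgdef] using hg.ne')
      exact this
    -- identify the partial derivatives in the statement
    have e1 : px (fun q => py H q / Real.sqrt ((px H q) ^ 2 + (py H q) ^ 2)) p
        = (B' (1, 0) * g - b * (1 / (2 * g) * (2 * a ^ 1 * A' (1, 0) + 2 * b ^ 1 * B' (1, 0))))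
          / g ^ 2 := hf1.deriv
    have e2 : py (fun q => px H q / Real.sqrt ((px H q) ^ 2 + (py H q) ^ 2)) p
        = (A' (0, 1) * g - a * (1 / (2 * g) * (2 * a ^ 1 * A' (0, 1) + 2 * b ^ 1 * B' (0, 1))))
          / g ^ 2 := hf2.deriv
    have e3 : py (px H) p = A' (0, 1) := (hasDerivAt_py hA').deriv
    have e4 : px (px H) p = A' (1, 0) := (hasDerivAt_px hA').deriv
    have e5 : py (py H) p = B' (0, 1) := (hasDerivAt_py hB').deriv
    rw [e1, e2, e3, e4, e5, hsymm]
    set u := A' (1, 0)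
    set v := A' (0, 1)
    set w := B' (0, 1)
    have hdiff :
        (v * g - b * (1 / (2 * g) * (2 * a ^ 1 * u + 2 * b ^ 1 * v))) / g ^ 2
          - (v * g - a * (1 / (2 * g) * (2 * a ^ 1 * v + 2 * b ^ 1 * w))) / g ^ 2
        = (v * (a ^ 2 - b ^ 2) - a * b * (u - w)) / g ^ 3 := by
      field_simp
      ring
    constructor
    · intro h
      have h0 : (v * (a ^ 2 - b ^ 2) - a * b * (u - w)) / g ^ 3 = 0 := by
        rw [← hdiff, h, sub_self]
      have := (div_eq_zero_iff.mp h0).resolve_right (by positivity)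
      linarith
    · intro h
      have h0 : (v * (a ^ 2 - b ^ 2) - a * b * (u - w)) / g ^ 3 = 0 := by
        rw [show v * (a ^ 2 - b ^ 2) - a * b * (u - w) = 0 by linarith, zero_div]
      rw [← hdiff] at h0
      linarith
  constructor
  · intro h p hp; exact (key p hp).mp (h p hp)
  · intro h p hp; exact (key p hp).mpr (h p hp)
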